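/- Let A be a commutative multiplicative hyperring with identity, let Q be a proper strong 𝒞-hyperideal of A such that a+1 ∉ U(A) for some a ∈ Q, and let u,v ∈ ℕ with u > v. Then Q is an AB-(u,v)-absorbing hyperideal of A if and only if Q is a (u,v)-absorbing hyperideal of A. -/

import Mathlib

/-- A commutative multiplicative hyperring with identity: `(A,+)` is a commutative group,
`∘ = hmul` is a commutative associative hyperoperation with nonempty values, satisfying
`x∘(y+z) ⊆ x∘y + x∘z`, `x∘(−y) = (−x)∘y = −(x∘y)`, and `a ∈ a∘1` for all `a`. -/
class CommHyperring (A : Type*) [AddCommGroup A] [One A] where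
  hmul : A → A → Set A
  hmul_nonempty : ∀ x y : A, (hmul x y).Nonempty
  hmul_comm : ∀ x y : A, hmul x y = hmul y x
  hmul_assoc : ∀ x y z : A, (⋃ a ∈ hmul y z, hmul x a) = ⋃ b ∈ hmul x y, hmul b z
  hmul_add : ∀ x y z : A, hmul x (y + z) ⊆ Set.image2 (· + ·) (hmul x y) (hmul x z)
  hmul_neg : ∀ x y : A, hmul x (-y) = Neg.neg '' hmul x y
  neg_hmul : ∀ x y : A, hmul (-x) y = Neg.neg '' hmul x y
  one_mem : ∀ a : A, a ∈ hmul a 1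

open CommHyperring

variable {A : Type*} [AddCommGroup A] [One A] [CommHyperring A]

/-- The hyperoperation extended to subsets: `X∘Y = ⋃_{x∈X, y∈Y} x∘y`. -/
def sMul (X Y : Set A) : Set A := ⋃ x ∈ X, ⋃ y ∈ Y, hmul x y

/-- The product `x₁∘⋯∘xₙ` of the members of a list. -/
def hProd : List A → Set A
  | [] => {1}
  | [a] => {a}
  | a :: l => ⋃ c ∈ hProd l, hmul a c

/-- `xⁿ = x∘⋯∘x` (`n` factors). -/
def hPow (a : A) (n : ℕ) : Set A := hProd (List.replicate n a)

/-- `a` is a unit if `1 ∈ a∘b` for some `b`. -/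
def IsUnitH (a : A) : Prop := ∃ b : A, (1 : A) ∈ hmul a b

/-- A hyperideal of `A`. -/
def IsHyperideal (B : Set A) : Prop :=
  B.Nonempty ∧ (∀ x ∈ B, ∀ y ∈ B, x - y ∈ B) ∧ ∀ r : A, ∀ x ∈ B, hmul r x ⊆ B

def IsProperHyperideal (B : Set A) : Prop := IsHyperideal B ∧ B ≠ Set.univ

/-- A prime hyperideal. -/
def IsPrimeHyperideal (B : Set A) : Prop :=
  IsProperHyperideal B ∧ ∀ x y : A, hmul x y ⊆ B → x ∈ B ∨ y ∈ B

/-- The prime radical: the intersection of all prime hyperideals containing `B`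
(`= A` if there are none). -/
def radH (B : Set A) : Set A := ⋂₀ {P : Set A | IsPrimeHyperideal P ∧ B ⊆ P}

/-- A `𝒞`-hyperideal: meets a finite product `⇒` contains it. -/
def IsCHyperideal (B : Set A) : Prop :=
  IsHyperideal B ∧ ∀ l : List A, l ≠ [] → (hProd l ∩ B).Nonempty → hProd l ⊆ B

def setAdd (X Y : Set A) : Set A := Set.image2 (· + ·) X Y

/-- The sum `C₁ + ⋯ + Cₙ` of the finite products coded by a list of lists. -/
def sumProds (L : List (List A)) : Set A := L.foldr (fun l S => setAdd (hProd l) S) {0}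

/-- A strong `𝒞`-hyperideal: meets a finite sum of finite products `⇒` contains it. -/
def IsStrongCHyperideal (B : Set A) : Prop :=
  IsHyperideal B ∧ ∀ L : List (List A), L ≠ [] → (∀ l ∈ L, l ≠ []) →
    (sumProds L ∩ B).Nonempty → sumProds L ⊆ B

/-- A `v`-absorbing hyperideal. -/
def IsNAbsorbing (Q : Set A) (v : ℕ) : Prop :=
  IsProperHyperideal Q ∧ ∀ l : List A, l.length = v + 1 → hProd l ⊆ Q →
    ∃ l', l'.Sublist l ∧ l'.length = v ∧ hProd l' ⊆ Q

/-- A `(u,v)`-absorbing hyperideal. -/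
def IsUVAbsorbing (Q : Set A) (u v : ℕ) : Prop :=
  IsProperHyperideal Q ∧ ∀ l : List A, l.length = u → (∀ x ∈ l, ¬IsUnitH x) → hProd l ⊆ Q →
    ∃ l', l'.Sublist l ∧ l'.length = v ∧ hProd l' ⊆ Q

/-- An `AB`-`(u,v)`-absorbing hyperideal. -/
def IsABUVAbsorbing (Q : Set A) (u v : ℕ) : Prop :=
  IsProperHyperideal Q ∧ ∀ l : List A, l.length = u → hProd l ⊆ Q →
    ∃ l', l'.Sublist l ∧ l'.length = v ∧ hProd l' ⊆ Q

/-- A `(u,v)`-absorbing prime hyperideal. -/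
def IsUVAbsorbingPrime (Q : Set A) (u v : ℕ) : Prop :=
  IsProperHyperideal Q ∧ ∀ l : List A, l.length = u → (∀ x ∈ l, ¬IsUnitH x) → hProd l ⊆ Q →
    hProd (l.take v) ⊆ Q ∨ hProd (l.drop v) ⊆ Q

/-- A maximal hyperideal. -/
def IsMaximalHyperideal (M : Set A) : Prop :=
  IsProperHyperideal M ∧ ∀ B : Set A, IsHyperideal B → M ⊂ B → B = Set.univ

/-- `A` is local if it has exactly one maximal hyperideal. -/
def IsLocalH (A : Type*) [AddCommGroup A] [One A] [CommHyperring A] : Prop :=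
  ∃! M : Set A, IsMaximalHyperideal M

/-- `P` is a prime hyperideal minimal over `Q`. -/
def MinimalPrimeOver (Q P : Set A) : Prop :=
  IsPrimeHyperideal P ∧ Q ⊆ P ∧
    ∀ P' : Set A, IsPrimeHyperideal P' → Q ⊆ P' → P' ⊆ P → P' = P

/-- `Iⁿ = ⋃ {x₁∘⋯∘xₙ : xᵢ ∈ I}`. -/
def idealPow (I : Set A) (n : ℕ) : Set A :=
  ⋃ l ∈ {l : List A | l.length = n ∧ ∀ x ∈ l, x ∈ I}, hProd l

/-- `I₁∘⋯∘Iₙ = ⋃ {x₁∘⋯∘xₙ : xᵢ ∈ Iᵢ}`. -/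
def idealProd (L : List (Set A)) : Set A :=
  ⋃ l ∈ {l : List A | List.Forall₂ (· ∈ ·) l L}, hProd l

/-- `Abs(Q)`: the minimal `v` such that `Q` is `v`-absorbing. -/
noncomputable def AbsN (Q : Set A) : ℕ := sInf {v : ℕ | IsNAbsorbing Q v}

/-- `abs(Q)`: the minimal `v` such that `Q` is `(Abs(Q)+1, v)`-absorbing. -/
noncomputable def absN (Q : Set A) : ℕ := sInf {v : ℕ | IsUVAbsorbing Q (AbsN Q + 1) v}

/-- A primary hyperideal. -/
def IsPrimaryHyperideal (Q : Set A) : Prop :=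
  IsProperHyperideal Q ∧ ∀ x y : A, hmul x y ⊆ Q → x ∈ Q ∨ ∃ t : ℕ, 1 ≤ t ∧ hPow y t ⊆ Q

/-- `A` is a hyperfield if every nonzero element is a unit. -/
def IsHyperfield (A : Type*) [AddCommGroup A] [One A] [CommHyperring A] : Prop :=
  ∀ x : A, x ≠ 0 → IsUnitH x

/-- `(Q : x) = {a : a∘x ⊆ Q}`. -/
def colonH (Q : Set A) (x : A) : Set A := {a : A | hmul a x ⊆ Q}

/-- `J(A)`: the intersection of all maximal hyperideals of `A`. -/
def JacobsonH (A : Type*) [AddCommGroup A] [One A] [CommHyperring A] : Set A :=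
  ⋂₀ {M : Set A | IsMaximalHyperideal M}

set_option linter.unusedSectionVars false

namespace ABUVAux

open CommHyperring

variable {A : Type*} [AddCommGroup A] [One A] [CommHyperring A]

lemma mem_sMul {X Y : Set A} {z : A} : z ∈ sMul X Y ↔ ∃ x ∈ X, ∃ y ∈ Y, z ∈ hmul x y := by
  simp [sMul]

lemma sMul_mono {X X' Y Y' : Set A} (hX : X ⊆ X') (hY : Y ⊆ Y') : sMul X Y ⊆ sMul X' Y' := by
  intro z hz
  obtain ⟨x, hx, y, hy, hz⟩ := mem_sMul.1 hz
  exact mem_sMul.2 ⟨x, hX hx, y, hY hy, hz⟩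

lemma sMul_comm (X Y : Set A) : sMul X Y = sMul Y X := by
  ext z
  simp only [mem_sMul]
  constructor
  · rintro ⟨x, hx, y, hy, hz⟩; exact ⟨y, hy, x, hx, by rwa [hmul_comm]⟩
  · rintro ⟨x, hx, y, hy, hz⟩; exact ⟨y, hy, x, hx, by rwa [hmul_comm]⟩

lemma sMul_assoc (X Y Z : Set A) : sMul (sMul X Y) Z = sMul X (sMul Y Z) := by
  ext w
  simp only [mem_sMul]
  constructor
  · rintro ⟨b, ⟨x, hx, y, hy, hb⟩, z, hz, hw⟩
    have : w ∈ ⋃ c ∈ hmul x y, hmul c z := Set.mem_biUnion hb hw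
    rw [← hmul_assoc x y z] at this
    obtain ⟨c, hc, hw'⟩ := Set.mem_iUnion₂.1 this
    exact ⟨x, hx, c, ⟨y, hy, z, hz, hc⟩, hw'⟩
  · rintro ⟨x, hx, c, ⟨y, hy, z, hz, hc⟩, hw⟩
    have : w ∈ ⋃ a ∈ hmul y z, hmul x a := Set.mem_biUnion hc hw
    rw [hmul_assoc x y z] at this
    obtain ⟨b, hb, hw'⟩ := Set.mem_iUnion₂.1 this
    exact ⟨b, ⟨x, hx, y, hy, hb⟩, z, hz, hw'⟩

lemma hProd_cons_ne (a : A) {l : List A} (h : l ≠ []) :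
    hProd (a :: l) = sMul {a} (hProd l) := by
  cases l with
  | nil => exact absurd rfl h
  | cons b t =>
    show (⋃ c ∈ hProd (b :: t), hmul a c) = _
    ext z; simp [sMul]

lemma hProd_singleton (a : A) : hProd [a] = {a} := rfl

lemma hProd_cons_subset (a : A) (l : List A) :
    hProd (a :: l) ⊆ sMul {a} (hProd l) := by
  cases l with
  | nil =>
    intro z hz
    rw [hProd_singleton] at hz
    rcases hz with rfl
    exact mem_sMul.2 ⟨z, rfl, 1, rfl, CommHyperring.one_mem z⟩
  | cons b t => rw [hProd_cons_ne a (l := b :: t) (by simp)]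

lemma hProd_nonempty (l : List A) : (hProd l).Nonempty := by
  induction l with
  | nil => exact ⟨1, rfl⟩
  | cons a t ih =>
    cases t with
    | nil => exact ⟨a, rfl⟩
    | cons b s =>
      obtain ⟨c, hc⟩ := ih
      obtain ⟨z, hz⟩ := hmul_nonempty a c
      exact ⟨z, Set.mem_biUnion hc hz⟩

lemma sMul_singleton_comm (a b : A) (P : Set A) :
    sMul (sMul {a} {b}) P = sMul (sMul {b} {a}) P := by
  rw [sMul_comm ({a} : Set A) {b}]

lemma hProd_swap (a b : A) (t : List A) : hProd (a :: b :: t) = hProd (b :: a :: t) := by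
  rcases eq_or_ne t [] with rfl | ht
  · rw [hProd_cons_ne a (l := [b]) (by simp), hProd_cons_ne b (l := [a]) (by simp),
      hProd_singleton, hProd_singleton, sMul_comm]
  · rw [hProd_cons_ne a (l := b :: t) (by simp), hProd_cons_ne b ht, ← sMul_assoc,
      hProd_cons_ne b (l := a :: t) (by simp), hProd_cons_ne a ht, ← sMul_assoc,
      sMul_singleton_comm]

lemma hProd_perm {l l' : List A} (h : l.Perm l') : hProd l = hProd l' := by
  induction h with
  | nil => rfl
  | cons a h ih =>
    rename_i t t'
    rcases eq_or_ne t [] with rfl | ht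
    · rw [h.symm.eq_nil]
    · have ht' : t' ≠ [] := by
        intro e; subst e; exact ht h.eq_nil
      rw [hProd_cons_ne a ht, hProd_cons_ne a ht', ih]
  | swap a b t => exact hProd_swap b a t
  | trans h1 h2 ih1 ih2 => rw [ih1, ih2]

lemma hProd_append_subset (l m : List A) :
    hProd (l ++ m) ⊆ sMul (hProd l) (hProd m) := by
  induction l with
  | nil =>
    intro z hz
    exact mem_sMul.2 ⟨1, rfl, z, hz, by rw [hmul_comm]; exact CommHyperring.one_mem z⟩
  | cons a t ih =>
    cases t with
    | nil =>
      show hProd (a :: m) ⊆ _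
      rw [hProd_singleton]
      exact hProd_cons_subset a m
    | cons b s =>
      calc hProd (a :: (b :: s ++ m)) ⊆ sMul {a} (hProd (b :: s ++ m)) :=
            hProd_cons_subset a _
        _ ⊆ sMul {a} (sMul (hProd (b :: s)) (hProd m)) := sMul_mono subset_rfl ih
        _ = sMul (sMul {a} (hProd (b :: s))) (hProd m) := (sMul_assoc _ _ _).symm
        _ = sMul (hProd (a :: b :: s)) (hProd m) := by rw [hProd_cons_ne a (l := b :: s) (by simp)]

lemma sMul_subset_of_left {Q : Set A} (hQ : IsHyperideal Q) {X : Set A} (hX : X ⊆ Q)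
    (Y : Set A) : sMul X Y ⊆ Q := by
  intro z hz
  obtain ⟨x, hx, y, _, hz⟩ := mem_sMul.1 hz
  rw [hmul_comm] at hz
  exact hQ.2.2 y x (hX hx) hz

lemma sublist_perm_append {m n : List A} (h : m.Sublist n) : ∃ c, n.Perm (m ++ c) := by
  induction h with
  | slnil => exact ⟨[], List.Perm.refl _⟩
  | cons a h ih =>
    obtain ⟨c, hc⟩ := ih
    rename_i m' n' _
    exact ⟨a :: c, ((hc.cons a).trans List.perm_middle.symm)⟩
  | cons_cons a h ih =>
    obtain ⟨c, hc⟩ := ih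
    exact ⟨c, hc.cons a⟩

lemma prod_superlist {Q : Set A} (hQ : IsHyperideal Q) {m n : List A}
    (h : m.Sublist n) (hm : hProd m ⊆ Q) : hProd n ⊆ Q := by
  obtain ⟨c, hc⟩ := sublist_perm_append h
  rw [hProd_perm hc]
  exact (hProd_append_subset m c).trans (sMul_subset_of_left hQ hm _)

lemma one_mem_imp_univ {Q : Set A} (hQ : IsHyperideal Q) (h1 : (1 : A) ∈ Q) :
    Q = Set.univ := by
  ext r
  simp only [Set.mem_univ, iff_true]
  exact hQ.2.2 r 1 h1 (CommHyperring.one_mem r)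

lemma unit_mem_imp_univ {Q : Set A} (hQ : IsHyperideal Q) {q : A} (hq : q ∈ Q)
    (hu : IsUnitH q) : Q = Set.univ := by
  obtain ⟨y, hy⟩ := hu
  exact one_mem_imp_univ hQ (hQ.2.2 y q hq (by rwa [hmul_comm] at hy))

lemma prod_cons_unit {Q : Set A} (hQ : IsHyperideal Q) {x : A} (hx : IsUnitH x)
    {l : List A} (hl : l ≠ []) (h : hProd (x :: l) ⊆ Q) : hProd l ⊆ Q := by
  obtain ⟨y, hy⟩ := hx
  intro p hp
  have h1 : hmul x p ⊆ Q := by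
    rw [hProd_cons_ne x hl] at h
    exact fun z hz => h (mem_sMul.2 ⟨x, rfl, p, hp, hz⟩)
  have h2 : p ∈ ⋃ c ∈ hmul x y, hmul p c := Set.mem_biUnion hy (CommHyperring.one_mem p)
  rw [hmul_assoc p x y] at h2
  obtain ⟨b, hb, hpb⟩ := Set.mem_iUnion₂.1 h2
  have hbQ : b ∈ Q := h1 (by rwa [hmul_comm x p])
  exact hQ.2.2 y b hbQ (by rwa [hmul_comm b y] at hpb)

lemma setAdd_zero (X : Set A) : setAdd X {0} = X := by
  ext z; simp [setAdd]

lemma prod_cons_aplus1 {Q : Set A} (hQ : IsStrongCHyperideal Q) {a : A} (haQ : a ∈ Q)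
    {l : List A} (hl : l ≠ []) (h : hProd ((a + 1) :: l) ⊆ Q) : hProd l ⊆ Q := by
  intro p hp
  have hideal := hQ.1
  have hQp : hmul (a + 1) p ⊆ Q := by
    rw [hProd_cons_ne _ hl] at h
    exact fun z hz => h (mem_sMul.2 ⟨a + 1, rfl, p, hp, hz⟩)
  have haP : hmul a p ⊆ hProd (a :: l) := by
    rw [hProd_cons_ne a hl]
    exact fun z hz => mem_sMul.2 ⟨a, rfl, p, hp, hz⟩
  have h1P : hmul 1 p ⊆ hProd ((1 : A) :: l) := by
    rw [hProd_cons_ne _ hl]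
    exact fun z hz => mem_sMul.2 ⟨1, rfl, p, hp, hz⟩
  have hD : sumProds [a :: l, (1 : A) :: l] = setAdd (hProd (a :: l)) (hProd ((1 : A) :: l)) := by
    show setAdd _ (setAdd _ {0}) = _
    rw [setAdd_zero]
  have hsub : hmul p (a + 1) ⊆ sumProds [a :: l, (1 : A) :: l] := by
    rw [hD]
    intro z hz
    obtain ⟨x, hx, y, hy, hz⟩ := Set.mem_image2.1 (hmul_add p a 1 hz)
    exact Set.mem_image2.2 ⟨x, haP (by rwa [hmul_comm a p]), y,
      h1P (by rwa [hmul_comm (1 : A) p]), hz⟩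
  obtain ⟨q, hq⟩ := hmul_nonempty p (a + 1)
  have hDQ : sumProds [a :: l, (1 : A) :: l] ⊆ Q := by
    refine hQ.2 [a :: l, (1 : A) :: l] (by simp) (by simp) ⟨q, hsub hq, hQp (by rwa [hmul_comm])⟩
  obtain ⟨r, hr⟩ := hmul_nonempty p a
  have hrQ : r ∈ Q := hideal.2.2 p a haQ hr
  have hrp : r + p ∈ Q := by
    apply hDQ
    rw [hD]
    exact Set.mem_image2.2 ⟨r, haP (by rwa [hmul_comm a p]), p,
      h1P (by rw [hmul_comm]; exact CommHyperring.one_mem p), rfl⟩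
  have := hideal.2.1 (r + p) hrp r hrQ
  rwa [add_sub_cancel_left] at this

lemma prod_strip {Q : Set A} (hQ : IsStrongCHyperideal Q) {a : A} (haQ : a ∈ Q) :
    ∀ (j : ℕ) (l₁ : List A), hProd (l₁ ++ List.replicate j (a + 1)) ⊆ Q → hProd l₁ ⊆ Q := by
  intro j
  induction j with
  | zero => intro l₁ h; simpa using h
  | succ j ih =>
    intro l₁ h
    have hperm : (l₁ ++ List.replicate (j + 1) (a + 1)).Perm
        ((a + 1) :: (l₁ ++ List.replicate j (a + 1))) := by
      have : List.replicate (j + 1) (a + 1) = (a + 1) :: List.replicate j (a + 1) := rfl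
      rw [this]
      exact List.perm_middle
    rw [hProd_perm hperm] at h
    rcases eq_or_ne (l₁ ++ List.replicate j (a + 1)) [] with he | hne
    · have hl1 : l₁ = [] := by
        rcases List.append_eq_nil_iff.1 he with ⟨h1, _⟩; exact h1
      subst hl1
      have : (a + 1 : A) ∈ Q := by
        have := h
        rw [he] at this
        exact this rfl
      have h1Q : (1 : A) ∈ Q := by
        have := hQ.1.2.1 (a + 1) this a haQ
        rwa [add_sub_cancel_left] at this
      intro z hz
      rcases hz with rfl
      exact h1Q
    · exact ih l₁ (prod_cons_aplus1 hQ haQ hne h)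

lemma sublist_extend : ∀ (n m : List A) (v : ℕ), m.Sublist n → m.length ≤ v →
    v ≤ n.length → ∃ p : List A, m.Sublist p ∧ p.Sublist n ∧ p.length = v := by
  intro n
  induction n with
  | nil =>
    intro m v hm hv hv'
    have hm0 : m = [] := List.sublist_nil.1 hm
    have hv0 : v = 0 := by simp at hv'; omega
    exact ⟨[], by simp [hm0], by simp, by simp [hv0]⟩
  | cons b n' ih =>
    intro m v hm hv hv'
    rcases eq_or_lt_of_le hv with heq | hlt
    · exact ⟨m, List.Sublist.refl m, hm, heq⟩
    · cases hm with
      | cons _ hm' =>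
        obtain ⟨p', h1, h2, h3⟩ := ih m (v - 1) hm' (by omega) (by simp at hv'; omega)
        exact ⟨b :: p', h1.cons b, h2.cons₂ b, by simp [h3]; omega⟩
      | @cons_cons m' _ _ hm' =>
        obtain ⟨p', h1, h2, h3⟩ := ih m' (v - 1) hm' (by simp at hlt; omega)
          (by simp at hv'; omega)
        exact ⟨b :: p', h1.cons₂ b, h2.cons₂ b, by simp [h3]; omega⟩

lemma exists_nonunit_sublist_aux {Q : Set A} (hQ : IsHyperideal Q) (hproper : Q ≠ Set.univ) :
    ∀ (n : ℕ) (l : List A), l.length = n → l ≠ [] → hProd l ⊆ Q →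
      ∃ m : List A, m.Sublist l ∧ m ≠ [] ∧ (∀ x ∈ m, ¬IsUnitH x) ∧ hProd m ⊆ Q := by
  classical
  intro n
  induction n using Nat.strong_induction_on with
  | _ n ih =>
    intro l hn hlne hsub
    by_cases hall : ∀ x ∈ l, ¬IsUnitH x
    · exact ⟨l, List.Sublist.refl l, hlne, hall, hsub⟩
    · push_neg at hall
      obtain ⟨x, hxl, hxu⟩ := hall
      have hperm := List.perm_cons_erase hxl
      rcases eq_or_ne (l.erase x) [] with he | hne
      · rw [he] at hperm
        have : hProd [x] ⊆ Q := by rw [← hProd_perm hperm]; exact hsub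
        have hxQ : x ∈ Q := this rfl
        exact absurd (unit_mem_imp_univ hQ hxQ hxu) hproper
      · have hsub' : hProd (l.erase x) ⊆ Q := by
          apply prod_cons_unit hQ hxu hne
          rw [← hProd_perm hperm]; exact hsub
        have hlen : (l.erase x).length < n := by
          rw [← hn, List.length_erase_of_mem hxl]
          have := List.length_pos_iff.2 hlne
          omega
        obtain ⟨m, h1, h2, h3, h4⟩ := ih _ hlen (l.erase x) rfl hne hsub'
        exact ⟨m, h1.trans (List.erase_sublist (a := x) (l := l)), h2, h3, h4⟩

lemma exists_nonunit_sublist {Q : Set A} (hQ : IsHyperideal Q) (hproper : Q ≠ Set.univ)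
    (l : List A) (hlne : l ≠ []) (hsub : hProd l ⊆ Q) :
    ∃ m : List A, m.Sublist l ∧ m ≠ [] ∧ (∀ x ∈ m, ¬IsUnitH x) ∧ hProd m ⊆ Q :=
  exists_nonunit_sublist_aux hQ hproper l.length l rfl hlne hsub

end ABUVAux

open ABUVAux in
/-- for a proper strong `𝒞`-hyperideal `Q` with `a+1 ∉ U(A)` for some
`a ∈ Q`, `Q` is `AB`-`(u,v)`-absorbing iff `Q` is `(u,v)`-absorbing. -/
theorem ab_uv_absorbing_iff_uv_absorbing (Q : Set A)
    (hQ : IsStrongCHyperideal Q) (hproper : Q ≠ Set.univ)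
    (ha : ∃ a ∈ Q, ¬IsUnitH (a + 1)) (u v : ℕ) (hv : 1 ≤ v) (hvu : v < u) :
    IsABUVAbsorbing Q u v ↔ IsUVAbsorbing Q u v := by
  constructor
  · rintro ⟨hp, h⟩
    exact ⟨hp, fun l hl _ hsub => h l hl hsub⟩
  · rintro ⟨hp, h⟩
    refine ⟨hp, fun l hlen hsub => ?_⟩
    obtain ⟨a, haQ, hau⟩ := ha
    have hlne : l ≠ [] := by
      intro e; subst e; simp at hlen; omega
    obtain ⟨m, hmsub, hmne, hmnu, hmQ⟩ :=
      exists_nonunit_sublist hQ.1 hproper l hlne hsub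
    by_cases hcase : m.length ≤ v
    · obtain ⟨p, hmp, hpl, hplen⟩ := sublist_extend l m v hmsub hcase (by rw [hlen]; omega)
      exact ⟨p, hpl, hplen, prod_superlist hQ.1 hmp hmQ⟩
    · push_neg at hcase
      have hmu : m.length ≤ u := by rw [← hlen]; exact hmsub.length_le
      by_cases hml : m.length = u
      · have hme : m = l := hmsub.eq_of_length (by rw [hlen, hml])
        subst hme
        exact h m hml hmnu hsub
      · set k := u - m.length with hk
        set M := m ++ List.replicate k (a + 1) with hM
        have hMlen : M.length = u := by simp [hM, hk]; omega
        have hMnu : ∀ x ∈ M, ¬IsUnitH x := by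
          intro x hx
          rcases List.mem_append.1 hx with hx | hx
          · exact hmnu x hx
          · rw [List.eq_of_mem_replicate hx]; exact hau
        have hMQ : hProd M ⊆ Q :=
          (hProd_append_subset m _).trans (sMul_subset_of_left hQ.1 hmQ _)
        obtain ⟨l'', hl''sub, hl''len, hl''Q⟩ := h M hMlen hMnu hMQ
        obtain ⟨l₁, l₂, rfl, h1, h2⟩ := List.sublist_append_iff.1 hl''sub
        obtain ⟨j, rfl⟩ : ∃ j, l₂ = List.replicate j (a + 1) := by
          refine ⟨l₂.length, List.eq_replicate_of_mem fun x hx => ?_⟩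
          exact List.eq_of_mem_replicate (h2.subset hx)
        have hQ1 : hProd l₁ ⊆ Q := prod_strip hQ haQ j l₁ hl''Q
        have hlen1 : l₁.length ≤ v := by
          rw [List.length_append] at hl''len; omega
        obtain ⟨p, hmp, hpl, hplen⟩ :=
          sublist_extend l l₁ v (h1.trans hmsub) hlen1 (by rw [hlen]; omega)
        exact ⟨p, hpl, hplen, prod_superlist hQ.1 hmp hQ1⟩
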